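/- arXiv:2603.19946 — 5 statements merged into one kernel-verified Lean document; each statement's English description precedes it below -/
import Mathlib

section
/- Let f : ℕ →. ℕ be a partial function and let g : ℕ → ℕ be a total function. Suppose every partial function h : ℕ →. ℕ that is T1-reducible to both f and g is T1-computable (equivalently, the meet of the T1 degrees of f and g is the bottom degree). Then f is T1-computable or g is computable. -/
open Classical in
/-- The oracle game: the list of previous answers by Merlin up to stage `i`,
for the answer sequence `s`. -/
def prefixList (s : ℕ → ℕ) (i : ℕ) : List ℕ := List.ofFn (fun j : Fin i => s j)

/-- A winning Arthur+Nimue strategy for the reduction game of the basic oracle `ℱ`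
to the basic oracle `𝒢`. -/
def Winning (ℱ 𝒢 : Set (Set ℕ)) (σ : List ℕ →. Option ℕ) (ν : Set ℕ → List ℕ → Set ℕ) : Prop :=
  (∀ F ∈ ℱ, ∀ l : List ℕ, ν F l ∈ 𝒢) ∧
  ∀ F ∈ ℱ, ∀ s : ℕ → ℕ, (∀ i, s i ∈ ν F (prefixList s i)) →
    ∃ k, (∀ i ≤ k, (σ (prefixList s i)).Dom) ∧
      (∀ i < k, none ∈ σ (prefixList s i)) ∧
      ∃ u ∈ F, some u ∈ σ (prefixList s k)

/-- The encoding of an Arthur strategy as a partial function `ℕ →. ℕ`, via the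
standard Mathlib encodings of `List ℕ` and `Option ℕ`. -/
def arthurCode (σ : List ℕ →. Option ℕ) : ℕ →. ℕ :=
  fun n => (σ (Denumerable.ofNat (List ℕ) n)).map Encodable.encode

open Classical in
/-- The decoding oracle associated to the promise problem `(P, Q)`: value `0` on `P`,
value `1` on `Q`, undefined elsewhere. -/
noncomputable def dOracle (P Q : Set ℕ) : ℕ →. ℕ :=
  fun n => ⟨n ∈ P ∪ Q, fun _ => if n ∈ Q then 1 else 0⟩

open Classical in
/-- The characteristic function of a set of naturals. -/
noncomputable def chi (A : Set ℕ) : ℕ → ℕ := fun n => if n ∈ A then 1 else 0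

/-- The coded cartesian product of two sets of naturals. -/
def tensor (P Q : Set ℕ) : Set ℕ := {x | ∃ p ∈ P, ∃ q ∈ Q, x = Nat.pair p q}

infixl:70 " ⊗ " => tensor

/-- Oracle computability, as in Mathlib's `Nat.RecursiveIn`. -/
inductive Nat.RecursiveInOracle (g : ℕ →. ℕ) : (ℕ →. ℕ) → Prop
  | zero : Nat.RecursiveInOracle g fun _ => 0
  | succ : Nat.RecursiveInOracle g Nat.succ
  | left : Nat.RecursiveInOracle g fun n => (Nat.unpair n).1
  | right : Nat.RecursiveInOracle g fun n => (Nat.unpair n).2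
  | oracle : Nat.RecursiveInOracle g g
  | pair {f h : ℕ →. ℕ} (hf : Nat.RecursiveInOracle g f) (hh : Nat.RecursiveInOracle g h) :
      Nat.RecursiveInOracle g fun n => (Nat.pair <$> f n <*> h n)
  | comp {f h : ℕ →. ℕ} (hf : Nat.RecursiveInOracle g f) (hh : Nat.RecursiveInOracle g h) :
      Nat.RecursiveInOracle g fun n => h n >>= f
  | prec {f h : ℕ →. ℕ} (hf : Nat.RecursiveInOracle g f) (hh : Nat.RecursiveInOracle g h) :
      Nat.RecursiveInOracle g
        (Nat.unpaired fun a n =>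
          n.rec (f a) fun y IH => do
            let i ← IH
            h (Nat.pair a (Nat.pair y i)))
  | rfind {f : ℕ →. ℕ} (hf : Nat.RecursiveInOracle g f) :
      Nat.RecursiveInOracle g fun a =>
        Nat.rfind fun n => (fun m => m = 0) <$> f (Nat.pair a n)

/-- `f` is T1-reducible to `g`: some partial function recursive in the oracle `g`
extends `f`. -/
def T1Reducible (f g : ℕ →. ℕ) : Prop :=
  ∃ h : ℕ →. ℕ, Nat.RecursiveInOracle g h ∧ ∀ n : ℕ, ∀ a ∈ f n, a ∈ h n

/-- `f` is T1-computable: it has a partial computable extension. -/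
def T1Computable (f : ℕ →. ℕ) : Prop :=
  ∃ h : ℕ →. ℕ, Nat.Partrec h ∧ ∀ n : ℕ, ∀ a ∈ f n, a ∈ h n

/-- Codes for oracle computations: Mathlib's `Nat.Partrec.Code` extended by an
`oracle` constructor. -/
inductive OCode : Type
  | zero : OCode
  | succ : OCode
  | left : OCode
  | right : OCode
  | oracle : OCode
  | pair : OCode → OCode → OCode
  | comp : OCode → OCode → OCode
  | prec : OCode → OCode → OCode
  | rfind' : OCode → OCode

/-- Evaluation of an oracle code relative to the oracle `g`, by the same structural
recursion as Mathlib's `Nat.Partrec.Code.eval`. -/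
def OCode.eval (g : ℕ →. ℕ) : OCode → ℕ →. ℕ
  | .zero => pure 0
  | .succ => Nat.succ
  | .left => ↑fun n : ℕ => n.unpair.1
  | .right => ↑fun n : ℕ => n.unpair.2
  | .oracle => g
  | .pair cf cg => fun n => Nat.pair <$> cf.eval g n <*> cg.eval g n
  | .comp cf cg => fun n => cg.eval g n >>= cf.eval g
  | .prec cf cg =>
    Nat.unpaired fun a n =>
      n.rec (cf.eval g a) fun y IH => do
        let i ← IH
        cg.eval g (Nat.pair a (Nat.pair y i))
  | .rfind' cf =>
    Nat.unpaired fun a m =>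
      (Nat.rfind fun n => (fun m => m = 0) <$> cf.eval g (Nat.pair a (n + m))).map (· + m)

/-- The `n`-th oracle code. -/
def OCode.ofNat : ℕ → OCode
  | 0 => .zero
  | 1 => .succ
  | 2 => .left
  | 3 => .right
  | 4 => .oracle
  | n + 5 =>
    have h1 : (n / 4).unpair.1 < n + 5 :=
      lt_of_le_of_lt (le_trans (Nat.unpair_left_le _) (Nat.div_le_self _ _)) (by omega)
    have h2 : (n / 4).unpair.2 < n + 5 :=
      lt_of_le_of_lt (le_trans (Nat.unpair_right_le _) (Nat.div_le_self _ _)) (by omega)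
    if n % 4 = 0 then .pair (OCode.ofNat (n / 4).unpair.1) (OCode.ofNat (n / 4).unpair.2)
    else if n % 4 = 1 then .comp (OCode.ofNat (n / 4).unpair.1) (OCode.ofNat (n / 4).unpair.2)
    else if n % 4 = 2 then .prec (OCode.ofNat (n / 4).unpair.1) (OCode.ofNat (n / 4).unpair.2)
    else .rfind' (OCode.ofNat (n / 4).unpair.1)

/-- `φ_e^g`: the evaluation of the `e`-th oracle code relative to the oracle `g`. -/
def phi (g : ℕ →. ℕ) (e : ℕ) : ℕ →. ℕ := (OCode.ofNat e).eval g

/-- `H_i^A`: the set of (codes of) oracle programs which, run with the characteristic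
function of `A` as oracle, halt on input `0` with output `i`. -/
def Hset (A : Set ℕ) (i : ℕ) : Set ℕ := {e : ℕ | (i : ℕ) ∈ phi (chi A) e 0}




namespace Stmt4Aux

open Nat.Partrec (Code)
open Nat.Partrec.Code

/-- Propositional rewriting for RecursiveIn. -/
theorem recIn_of_eq {g f f' : ℕ →. ℕ} (h : Nat.RecursiveInOracle g f) (H : ∀ n, f n = f' n) :
    Nat.RecursiveInOracle g f' := (funext H : f = f') ▸ h

theorem partrec_recursiveIn {g f : ℕ →. ℕ} (hf : Nat.Partrec f) : Nat.RecursiveInOracle g f := by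
  induction hf with
  | zero => exact .zero
  | succ => exact .succ
  | left => exact .left
  | right => exact .right
  | pair _ _ ihf ihh => exact .pair ihf ihh
  | comp _ _ ihf ihh => exact .comp ihf ihh
  | prec _ _ ihf ihh => exact .prec ihf ihh
  | rfind _ ihf => exact .rfind ihf

theorem computable_recursiveIn {g : ℕ →. ℕ} {f : ℕ → ℕ} (hf : Computable f) :
    Nat.RecursiveInOracle g (fun n => Part.some (f n)) := by
  have : Nat.Partrec (fun n => Part.some (f n)) := by
    have := Partrec.nat_iff.1 hf.partrec
    exact this
  exact partrec_recursiveIn this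

/-- the input coding -/
def xc (n v k y : ℕ) : ℕ := Nat.pair n (Nat.pair v (Nat.pair k y))

noncomputable def Fside (f : ℕ →. ℕ) : ℕ →. ℕ :=
  fun x => (f x.unpair.1).map (fun w => if w = x.unpair.2.unpair.1 then 1 else 0)

noncomputable def Gside (g : ℕ → ℕ) : ℕ → ℕ :=
  fun x => if g x.unpair.2.unpair.2.unpair.1 = x.unpair.2.unpair.2.unpair.2 then 1 else 0

theorem recF (f : ℕ →. ℕ) : Nat.RecursiveInOracle f (Fside f) := by
  have hid : Nat.RecursiveInOracle f (fun x : ℕ => Part.some x) :=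
    computable_recursiveIn Computable.id
  have hfo : Nat.RecursiveInOracle f (fun x : ℕ => f x.unpair.1) := by
    have := Nat.RecursiveInOracle.comp (f := f) (h := fun n => (Nat.unpair n).1) .oracle .left
    exact recIn_of_eq this (fun n => Part.bind_some _ _)
  have hA : Nat.RecursiveInOracle f
      (fun x => Nat.pair <$> (Part.some x : Part ℕ) <*> f x.unpair.1) :=
    .pair hid hfo
  have hpost : Nat.RecursiveInOracle f
      (fun z : ℕ => Part.some (if z.unpair.2 = z.unpair.1.unpair.2.unpair.1 then 1 else 0)) :=
    computable_recursiveIn (by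
      apply Primrec.to_comp
      apply Primrec.ite
      · exact Primrec.eq.comp (Primrec.snd.comp Primrec.unpair)
          (Primrec.fst.comp (Primrec.unpair.comp (Primrec.snd.comp
            (Primrec.unpair.comp (Primrec.fst.comp Primrec.unpair)))))
      · exact Primrec.const 1
      · exact Primrec.const 0)
  have := Nat.RecursiveInOracle.comp hpost hA
  refine recIn_of_eq this (fun x => ?_)
  apply Part.ext; intro a
  simp [Fside, Seq.seq]
  aesop

theorem recG (g : ℕ → ℕ) : Nat.RecursiveInOracle (↑g) (fun x => Part.some (Gside g x)) := by
  have hid : Nat.RecursiveInOracle (↑g : ℕ →. ℕ) (fun x : ℕ => Part.some x) :=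
    computable_recursiveIn Computable.id
  have hgo : Nat.RecursiveInOracle (↑g : ℕ →. ℕ)
      (fun x : ℕ => (↑g : ℕ →. ℕ) x.unpair.2.unpair.2.unpair.1) := by
    have hproj : Nat.RecursiveInOracle (↑g : ℕ →. ℕ)
        (fun x : ℕ => Part.some x.unpair.2.unpair.2.unpair.1) :=
      computable_recursiveIn (Primrec.to_comp
        (Primrec.fst.comp (Primrec.unpair.comp (Primrec.snd.comp
          (Primrec.unpair.comp (Primrec.snd.comp Primrec.unpair))))))
    have := Nat.RecursiveInOracle.comp (f := (↑g : ℕ →. ℕ)) .oracle hproj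
    exact recIn_of_eq this (fun n => Part.bind_some _ _)
  have hA : Nat.RecursiveInOracle (↑g : ℕ →. ℕ)
      (fun x => Nat.pair <$> (Part.some x : Part ℕ) <*> (↑g : ℕ →. ℕ) x.unpair.2.unpair.2.unpair.1) :=
    .pair hid hgo
  have hpost : Nat.RecursiveInOracle (↑g : ℕ →. ℕ)
      (fun z : ℕ => Part.some (if z.unpair.2 = z.unpair.1.unpair.2.unpair.2.unpair.2 then 1 else 0)) :=
    computable_recursiveIn (by
      apply Primrec.to_comp
      apply Primrec.ite
      · exact Primrec.eq.comp (Primrec.snd.comp Primrec.unpair)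
          (Primrec.snd.comp (Primrec.unpair.comp (Primrec.snd.comp
            (Primrec.unpair.comp (Primrec.snd.comp
              (Primrec.unpair.comp (Primrec.fst.comp Primrec.unpair)))))))
      · exact Primrec.const 1
      · exact Primrec.const 0)
  have := Nat.RecursiveInOracle.comp hpost hA
  refine recIn_of_eq this (fun x => ?_)
  apply Part.ext; intro a
  simp [Gside, Seq.seq]




section Main

open Nat.Partrec (Code)

noncomputable def hmid (f : ℕ →. ℕ) (g : ℕ → ℕ) : ℕ →. ℕ :=
  fun x => (Fside f x).bind (fun w => if w = Gside g x then Part.some w else Part.none)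

theorem mem_hmid {f : ℕ →. ℕ} {g : ℕ → ℕ} {x a : ℕ} :
    a ∈ hmid f g x ↔ a ∈ Fside f x ∧ a = Gside g x := by
  simp only [hmid, Part.mem_bind_iff]
  constructor
  · rintro ⟨b, hb, hite⟩
    split_ifs at hite with hbe
    · rw [Part.mem_some_iff] at hite; subst hite; exact ⟨hb, hbe⟩
    · exact absurd hite (Part.notMem_none a)
  · rintro ⟨hb, he⟩
    exact ⟨a, hb, by rw [if_pos he]; exact Part.mem_some a⟩

theorem alpha {f : ℕ →. ℕ} {g : ℕ → ℕ} {n v k y : ℕ} (hv : v ∈ f n) (hy : g k = y) :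
    (1 : ℕ) ∈ hmid f g (xc n v k y) := by
  have hF : (1 : ℕ) ∈ Fside f (xc n v k y) := by
    simp only [Fside, xc, Nat.unpair_pair, Part.mem_map_iff]
    exact ⟨v, hv, by simp⟩
  have hG : Gside g (xc n v k y) = 1 := by
    simp [Gside, xc, Nat.unpair_pair, hy]
  exact mem_hmid.2 ⟨hF, hG.symm⟩

theorem beta {f : ℕ →. ℕ} {g : ℕ → ℕ} {n v k y w : ℕ} (hw : w ∈ f n) (h1 : w ≠ v)
    (h2 : g k ≠ y) : (0 : ℕ) ∈ hmid f g (xc n v k y) := by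
  have hF : (0 : ℕ) ∈ Fside f (xc n v k y) := by
    simp only [Fside, xc, Nat.unpair_pair, Part.mem_map_iff]
    exact ⟨w, hw, by simp [h1]⟩
  have hG : Gside g (xc n v k y) = 0 := by
    simp [Gside, xc, Nat.unpair_pair, h2]
  exact mem_hmid.2 ⟨hF, hG.symm⟩

/-- components of the search tuple -/
def tv (t : ℕ) : ℕ := t.unpair.1
def tk (t : ℕ) : ℕ := t.unpair.2.unpair.1
def ty (t : ℕ) : ℕ := t.unpair.2.unpair.2.unpair.1
def ty' (t : ℕ) : ℕ := t.unpair.2.unpair.2.unpair.2.unpair.1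
def ts (t : ℕ) : ℕ := t.unpair.2.unpair.2.unpair.2.unpair.2

def PP (c : Code) (n t : ℕ) : Prop :=
  ty t ≠ ty' t ∧ Nat.Partrec.Code.evaln (ts t) c (xc n (tv t) (tk t) (ty t)) = some 1 ∧
    Nat.Partrec.Code.evaln (ts t) c (xc n (tv t) (tk t) (ty' t)) = some 1

instance (c : Code) (n t : ℕ) : Decidable (PP c n t) := by unfold PP; infer_instance

def QQ (c : Code) (n0 w m u : ℕ) : Prop :=
  Nat.Partrec.Code.evaln u.unpair.2 c (xc n0 w m u.unpair.1) = some 1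

instance (c : Code) (n0 w m u : ℕ) : Decidable (QQ c n0 w m u) := by unfold QQ; infer_instance

theorem hev (c : Code) : Primrec₂ fun (s x : ℕ) => Nat.Partrec.Code.evaln s c x := by
  have h : Primrec fun a : ℕ × ℕ => (((a.1, c), a.2) : (ℕ × Nat.Partrec.Code) × ℕ) :=
    (Primrec.fst.pair (Primrec.const c)).pair Primrec.snd
  exact Nat.Partrec.Code.primrec_evaln.comp h

theorem PP_prim (c : Code) : PrimrecPred fun a : ℕ × ℕ => PP c a.1 a.2 := by
  have pt : Primrec fun a : ℕ × ℕ => a.2 := Primrec.snd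
  have pn : Primrec fun a : ℕ × ℕ => a.1 := Primrec.fst
  have pv : Primrec fun a : ℕ × ℕ => tv a.2 := Primrec.fst.comp (Primrec.unpair.comp pt)
  have pr : Primrec fun a : ℕ × ℕ => (a.2).unpair.2 := Primrec.snd.comp (Primrec.unpair.comp pt)
  have pk : Primrec fun a : ℕ × ℕ => tk a.2 := Primrec.fst.comp (Primrec.unpair.comp pr)
  have pr2 : Primrec fun a : ℕ × ℕ => (a.2).unpair.2.unpair.2 :=
    Primrec.snd.comp (Primrec.unpair.comp pr)
  have py : Primrec fun a : ℕ × ℕ => ty a.2 := Primrec.fst.comp (Primrec.unpair.comp pr2)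
  have pr3 : Primrec fun a : ℕ × ℕ => (a.2).unpair.2.unpair.2.unpair.2 :=
    Primrec.snd.comp (Primrec.unpair.comp pr2)
  have py' : Primrec fun a : ℕ × ℕ => ty' a.2 := Primrec.fst.comp (Primrec.unpair.comp pr3)
  have ps : Primrec fun a : ℕ × ℕ => ts a.2 := Primrec.snd.comp (Primrec.unpair.comp pr3)
  have pxcy : Primrec fun a : ℕ × ℕ => xc a.1 (tv a.2) (tk a.2) (ty a.2) :=
    Primrec₂.natPair.comp pn (Primrec₂.natPair.comp pv (Primrec₂.natPair.comp pk py))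
  have pxcy' : Primrec fun a : ℕ × ℕ => xc a.1 (tv a.2) (tk a.2) (ty' a.2) :=
    Primrec₂.natPair.comp pn (Primrec₂.natPair.comp pv (Primrec₂.natPair.comp pk py'))
  have h1 : PrimrecPred fun a : ℕ × ℕ =>
      Nat.Partrec.Code.evaln (ts a.2) c (xc a.1 (tv a.2) (tk a.2) (ty a.2)) = some 1 :=
    PrimrecRel.comp Primrec.eq ((hev c).comp ps pxcy) (Primrec.const (some 1))
  have h2 : PrimrecPred fun a : ℕ × ℕ =>
      Nat.Partrec.Code.evaln (ts a.2) c (xc a.1 (tv a.2) (tk a.2) (ty' a.2)) = some 1 :=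
    PrimrecRel.comp Primrec.eq ((hev c).comp ps pxcy') (Primrec.const (some 1))
  have hne : PrimrecPred fun a : ℕ × ℕ => ¬ (ty a.2 = ty' a.2) :=
    (PrimrecRel.comp Primrec.eq py py').not
  exact (hne.and (h1.and h2)).of_eq (fun a => Iff.rfl)

theorem QQ_prim (c : Code) (n0 w : ℕ) : PrimrecPred fun a : ℕ × ℕ => QQ c n0 w a.1 a.2 := by
  have pu : Primrec fun a : ℕ × ℕ => a.2 := Primrec.snd
  have pm : Primrec fun a : ℕ × ℕ => a.1 := Primrec.fst
  have py : Primrec fun a : ℕ × ℕ => (a.2).unpair.1 := Primrec.fst.comp (Primrec.unpair.comp pu)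
  have ps : Primrec fun a : ℕ × ℕ => (a.2).unpair.2 := Primrec.snd.comp (Primrec.unpair.comp pu)
  have pxcy : Primrec fun a : ℕ × ℕ => xc n0 w a.1 ((a.2).unpair.1) :=
    Primrec₂.natPair.comp (Primrec.const n0) (Primrec₂.natPair.comp (Primrec.const w)
      (Primrec₂.natPair.comp pm py))
  exact (PrimrecRel.comp Primrec.eq ((hev c).comp ps pxcy)
    (Primrec.const (some 1))).of_eq (fun a => Iff.rfl)

end Main

end Stmt4Aux

theorem stmt4 (f : ℕ →. ℕ) (g : ℕ → ℕ)
    (hmeet : ∀ h : ℕ →. ℕ, T1Reducible h f → T1Reducible h ↑g → T1Computable h) :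
    T1Computable f ∨ Computable g := by
  classical
  open Stmt4Aux in
  obtain ⟨p, pp, pext⟩ := hmeet (hmid f g)
    ⟨Fside f, recF f, fun n a ha => (mem_hmid.1 ha).1⟩
    ⟨fun x => Part.some (Gside g x), recG g, fun n a ha => by
      simp only [Part.mem_some_iff]; exact (mem_hmid.1 ha).2⟩
  obtain ⟨c, hc⟩ := Nat.Partrec.Code.exists_code.1 pp
  have pm1 : ∀ n v k y : ℕ, v ∈ f n → g k = y → (1 : ℕ) ∈ p (xc n v k y) :=
    fun n v k y hv hy => pext _ _ (alpha hv hy)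
  have pm0 : ∀ n v k y w : ℕ, w ∈ f n → w ≠ v → g k ≠ y → (0 : ℕ) ∈ p (xc n v k y) :=
    fun n v k y w hw h1 h2 => pext _ _ (beta hw h1 h2)
  -- soundness of the double-firing search
  have sound : ∀ n w : ℕ, w ∈ f n → ∀ t : ℕ, PP c n t → tv t = w := by
    intro n w hw t hP
    obtain ⟨hyy, h1, h2⟩ := hP
    have e1 : (1 : ℕ) ∈ p (xc n (tv t) (tk t) (ty t)) := by
      rw [← hc]; exact Nat.Partrec.Code.evaln_sound (Option.mem_def.2 h1)
    have e2 : (1 : ℕ) ∈ p (xc n (tv t) (tk t) (ty' t)) := by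
      rw [← hc]; exact Nat.Partrec.Code.evaln_sound (Option.mem_def.2 h2)
    by_contra hne
    by_cases hy : ty t = g (tk t)
    · have hgk : g (tk t) ≠ ty' t := fun hh => hyy (hy.trans hh)
      have := pm0 n (tv t) (tk t) (ty' t) w hw (fun hh => hne hh.symm) hgk
      exact absurd (Part.mem_unique this e2) (by norm_num)
    · have hgk : g (tk t) ≠ ty t := fun hh => hy hh.symm
      have := pm0 n (tv t) (tk t) (ty t) w hw (fun hh => hne hh.symm) hgk
      exact absurd (Part.mem_unique this e1) (by norm_num)
  by_cases hs : ∀ n : ℕ, (f n).Dom → ∃ t : ℕ, PP c n t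
  · -- success: f is T1-computable
    left
    refine ⟨fun n => (Nat.rfind (fun t => Part.some (decide (PP c n t)))).map tv, ?_, ?_⟩
    · have hcomp : Computable₂ fun n t : ℕ => decide (PP c n t) :=
        Primrec₂.to_comp (PP_prim c).decide
      have hrf : Partrec fun n : ℕ => Nat.rfind (fun t => Part.some (decide (PP c n t))) :=
        Partrec.rfind hcomp.partrec₂
      have : Partrec fun n : ℕ =>
          (Nat.rfind (fun t => Part.some (decide (PP c n t)))).map tv :=
        hrf.map ((Primrec.fst.comp (Primrec.unpair.comp Primrec.snd)).to_comp).to₂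
      exact Partrec.nat_iff.1 this
    · intro n a ha
      obtain ⟨t0, ht0⟩ := hs n ((Part.dom_iff_mem).2 ⟨a, ha⟩)
      have hdom : (Nat.rfind (fun t => Part.some (decide (PP c n t)))).Dom := by
        refine Nat.rfind_dom.2 ?_
        exact ⟨t0, by simp [ht0], fun {m} _ => trivial⟩
      have ht1 := Part.get_mem hdom
      have hP1 : PP c n ((Nat.rfind (fun t => Part.some (decide (PP c n t)))).get hdom) := by
        have := Nat.rfind_spec ht1
        simpa using this
      exact (Part.mem_map_iff _).2 ⟨_, ht1, sound n a ha _ hP1⟩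
  · -- failure: g is computable
    right
    push_neg at hs
    obtain ⟨n0, hdom, hno⟩ := hs
    set w := (f n0).get hdom with hwdef
    have hw : w ∈ f n0 := Part.get_mem hdom
    have key : ∀ k y : ℕ, (1 : ℕ) ∈ p (xc n0 w k y) → y = g k := by
      intro k y h1
      by_contra hne
      have h2 : (1 : ℕ) ∈ p (xc n0 w k (g k)) := pm1 n0 w k (g k) hw rfl
      rw [← hc] at h1 h2
      obtain ⟨s1, hs1⟩ := Nat.Partrec.Code.evaln_complete.1 h1
      obtain ⟨s2, hs2⟩ := Nat.Partrec.Code.evaln_complete.1 h2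
      have hs1' := Nat.Partrec.Code.evaln_mono (le_max_left s1 s2) hs1
      have hs2' := Nat.Partrec.Code.evaln_mono (le_max_right s1 s2) hs2
      refine hno (Nat.pair w (Nat.pair k (Nat.pair y (Nat.pair (g k) (max s1 s2))))) ?_
      refine ⟨?_, ?_, ?_⟩ <;>
        simp only [tv, tk, ty, ty', ts, Nat.unpair_pair]
      · exact hne
      · exact Option.mem_def.1 hs1'
      · exact Option.mem_def.1 hs2'
    have hqpar : Partrec fun m : ℕ =>
        (Nat.rfind (fun u => Part.some (decide (QQ c n0 w m u)))).map (fun u => u.unpair.1) := by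
      have hcomp : Computable₂ fun m u : ℕ => decide (QQ c n0 w m u) :=
        Primrec₂.to_comp (QQ_prim c n0 w).decide
      exact (Partrec.rfind hcomp.partrec₂).map
        ((Primrec.fst.comp (Primrec.unpair.comp Primrec.snd)).to_comp).to₂
    refine Partrec.of_eq_tot hqpar ?_
    intro m
    have hfire : (1 : ℕ) ∈ p (xc n0 w m (g m)) := pm1 n0 w m (g m) hw rfl
    obtain ⟨s0, hs0⟩ := Nat.Partrec.Code.evaln_complete.1 (hc ▸ hfire)
    have hQ0 : QQ c n0 w m (Nat.pair (g m) s0) := by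
      simp only [QQ, Nat.unpair_pair]
      exact Option.mem_def.1 hs0
    have hdm : (Nat.rfind (fun u => Part.some (decide (QQ c n0 w m u)))).Dom := by
      refine Nat.rfind_dom.2 ?_
      exact ⟨Nat.pair (g m) s0, by simp [hQ0], fun {u} _ => trivial⟩
    have hu1 := Part.get_mem hdm
    set u1 := (Nat.rfind (fun u => Part.some (decide (QQ c n0 w m u)))).get hdm with hu1def
    have hQ1 : QQ c n0 w m u1 := by
      have := Nat.rfind_spec hu1
      simpa using this
    have h1p : (1 : ℕ) ∈ p (xc n0 w m u1.unpair.1) := by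
      rw [← hc]
      exact Nat.Partrec.Code.evaln_sound (Option.mem_def.2 hQ1)
    have := key m u1.unpair.1 h1p
    exact (Part.mem_map_iff _).2 ⟨u1, hu1, this⟩
end

section
/- Let P, Q ⊆ ℕ be disjoint and inhabited. Then there exists a winning Arthur+Nimue strategy for the reduction game of the basic oracle {{0},{1}} to the basic oracle {P, Q} whose Arthur strategy is recursive in the decoding oracle d_{P,Q}. (This expresses that d_{P,Q} ∨ c_{P,Q} is the omniscient degree ω.) In particular, if d_{P,Q} has a partial computable extension, then there is such a winning pair with partial computable Arthur strategy. -/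
infixl:70 " ⊗ " => tensor

lemma partrec_recIn {g f : ℕ →. ℕ} (hf : Nat.Partrec f) : Nat.RecursiveInOracle g f := by
  induction hf with
  | zero => exact .zero
  | succ => exact .succ
  | left => exact .left
  | right => exact .right
  | pair _ _ ih1 ih2 => exact .pair ih1 ih2
  | comp _ _ ih1 ih2 => exact .comp ih1 ih2
  | prec _ _ ih1 ih2 => exact .prec ih1 ih2
  | rfind _ ih => exact .rfind ih

lemma recIn_partrec {g f : ℕ →. ℕ} (hf : Nat.RecursiveInOracle g f) (hg : Nat.Partrec g) :
    Nat.Partrec f := by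
  induction hf with
  | zero => exact .zero
  | succ => exact .succ
  | left => exact .left
  | right => exact .right
  | oracle => exact hg
  | pair _ _ ih1 ih2 => exact .pair ih1 ih2
  | comp _ _ ih1 ih2 => exact .comp ih1 ih2
  | prec _ _ ih1 ih2 => exact .prec ih1 ih2
  | rfind _ ih => exact .rfind ih

/-- The generic Arthur strategy built from a decoding function `g`. -/
def sigmaOf (g : ℕ →. ℕ) : List ℕ →. Option ℕ :=
  fun l => match l with
  | [] => Part.some none
  | a :: _ => (g a).map some

/-- The nat-level version of `sigmaOf g`. -/
def natSigma (g : ℕ →. ℕ) : ℕ →. ℕ :=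
  fun n => Nat.casesOn n (Part.some 0) (fun m => (g m.unpair.1).map (· + 1))

lemma arthurCode_sigmaOf (g : ℕ →. ℕ) : arthurCode (sigmaOf g) = natSigma g := by
  funext n
  cases n with
  | zero => simp [arthurCode, natSigma, sigmaOf]
  | succ m =>
    simp only [arthurCode, natSigma, Denumerable.list_ofNat_succ]
    simp [sigmaOf, Part.map_map, Function.comp_def, Encodable.encode_some]

lemma natSigma_recIn (g : ℕ →. ℕ) : Nat.RecursiveInOracle g (natSigma g) := by
  have hpre : Nat.RecursiveInOracle g (fun k : ℕ => ((k.unpair.1 - 1).unpair.1 : Part ℕ)) := by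
    apply partrec_recIn
    apply Nat.Partrec.of_primrec
    exact (Nat.Primrec.left.comp (Nat.Primrec.pred.comp Nat.Primrec.left))
  have hh : Nat.RecursiveInOracle g (fun k : ℕ => (g ((k.unpair.1 - 1).unpair.1)).map (· + 1)) := by
    have := Nat.RecursiveInOracle.comp (f := (Nat.succ : ℕ →. ℕ))
      (h := fun k : ℕ => ((k.unpair.1 - 1).unpair.1 : Part ℕ) >>= g)
      (Nat.RecursiveInOracle.succ (g := g))
      (Nat.RecursiveInOracle.comp (Nat.RecursiveInOracle.oracle) hpre)
    refine (congrArg (Nat.RecursiveInOracle g) ?_).mpr this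
    funext k
    have h1 : ((↑(some ((k.unpair.1 - 1).unpair.1)) : Part ℕ) >>= g)
        = g ((k.unpair.1 - 1).unpair.1) := by exact Part.bind_some _ _
    show Part.map (· + 1) (g ((k.unpair.1 - 1).unpair.1)) = _ >>= _
    simp only [h1]
    rw [← Part.bind_some_eq_map]
    rfl
  have ht : Nat.RecursiveInOracle g (fun n : ℕ => (Nat.pair n (min n 1) : Part ℕ)) := by
    apply partrec_recIn
    apply Nat.Partrec.of_primrec
    have : Nat.Primrec (fun n : ℕ => Nat.pair n (min n 1)) := by
      have h1 : Nat.Primrec (fun n : ℕ => min n 1) := by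
        have := Primrec.nat_min.comp (Primrec.id (α := ℕ)) (Primrec.const 1)
        exact Primrec.nat_iff.mp this
      exact Nat.Primrec.pair Nat.Primrec.id h1
    exact this
  have hmain := Nat.RecursiveInOracle.comp
    (Nat.RecursiveInOracle.prec (Nat.RecursiveInOracle.zero (g := g)) hh) ht
  refine (congrArg (Nat.RecursiveInOracle g) ?_).mpr hmain
  funext n
  cases n with
  | zero =>
    show Part.some 0 = _
    simp
    rfl
  | succ m =>
    have hmin : min (m + 1) 1 = 1 := by omega
    show Part.map (· + 1) (g m.unpair.1) = _
    simp only [hmin]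
    have h0 : (0 : Part ℕ) = Part.some 0 := rfl
    simp [h0]

open Classical in
lemma winning_sigmaOf (P Q : Set ℕ) (g : ℕ →. ℕ)
    (hgP : ∀ a ∈ P, (0 : ℕ) ∈ g a) (hgQ : ∀ a ∈ Q, (1 : ℕ) ∈ g a) :
    Winning {{0}, {1}} {P, Q} (sigmaOf g)
      (fun F _ => if (0 : ℕ) ∈ F then P else Q) := by
  constructor
  · intro F _ l
    by_cases h : (0 : ℕ) ∈ F <;> simp [h]
  · intro F hF s hs
    have hpre0 : prefixList s 0 = [] := by simp [prefixList]
    have hpre1 : prefixList s 1 = [s 0] := by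
      simp [prefixList, List.ofFn_succ, List.ofFn_zero]
    rcases hF with hF | hF
    · -- F = {0}
      subst hF
      have hs0 : s 0 ∈ P := by
        have := hs 0
        simpa [hpre0] using this
      refine ⟨1, ?_, ?_, 0, rfl, ?_⟩
      · intro i hi
        interval_cases i
        · simp [hpre0, sigmaOf]
        · rw [hpre1]
          exact Part.dom_iff_mem.mpr ⟨some 0, Part.mem_map _ (hgP _ hs0)⟩
      · intro i hi
        interval_cases i
        simp [hpre0, sigmaOf]
      · rw [hpre1]
        exact Part.mem_map _ (hgP _ hs0)
    · -- F = {1}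
      have hF' : F = {1} := hF
      subst hF'
      have h01 : (0 : ℕ) ∉ ({1} : Set ℕ) := by simp
      have hs0 : s 0 ∈ Q := by
        have := hs 0
        simpa [hpre0, h01] using this
      refine ⟨1, ?_, ?_, 1, rfl, ?_⟩
      · intro i hi
        interval_cases i
        · simp [hpre0, sigmaOf]
        · rw [hpre1]
          exact Part.dom_iff_mem.mpr ⟨some 1, Part.mem_map _ (hgQ _ hs0)⟩
      · intro i hi
        interval_cases i
        simp [hpre0, sigmaOf]
      · rw [hpre1]
        exact Part.mem_map _ (hgQ _ hs0)

lemma partrec_iff_arthur (σ : List ℕ →. Option ℕ) :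
    Partrec σ ↔ Nat.Partrec (arthurCode σ) := by
  unfold Partrec
  constructor <;> intro h <;> [skip; skip] <;>
  · refine (congrArg Nat.Partrec ?_).mpr h
    funext n
    simp [arthurCode, Denumerable.decode_eq_ofNat]

theorem stmt8 (P Q : Set ℕ) (hdisj : Disjoint P Q) (hP : P.Nonempty) (hQ : Q.Nonempty) :
    (∃ (σ : List ℕ →. Option ℕ) (ν : Set ℕ → List ℕ → Set ℕ),
      Nat.RecursiveInOracle (dOracle P Q) (arthurCode σ) ∧ Winning {{0}, {1}} {P, Q} σ ν) ∧
    (T1Computable (dOracle P Q) →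
      ∃ (σ : List ℕ →. Option ℕ) (ν : Set ℕ → List ℕ → Set ℕ),
        Partrec σ ∧ Winning {{0}, {1}} {P, Q} σ ν) := by
  have hdP : ∀ a ∈ P, (0 : ℕ) ∈ dOracle P Q a := by
    intro a ha
    exact ⟨Or.inl ha, if_neg (Set.disjoint_left.mp hdisj ha)⟩
  have hdQ : ∀ a ∈ Q, (1 : ℕ) ∈ dOracle P Q a := by
    intro a ha
    exact ⟨Or.inr ha, if_pos ha⟩
  constructor
  · refine ⟨sigmaOf (dOracle P Q), _, ?_, winning_sigmaOf P Q _ hdP hdQ⟩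
    rw [arthurCode_sigmaOf]
    exact natSigma_recIn _
  · rintro ⟨h, hpr, hext⟩
    refine ⟨sigmaOf h, _, ?_, winning_sigmaOf P Q h
      (fun a ha => hext a 0 (hdP a ha)) (fun a ha => hext a 1 (hdQ a ha))⟩
    rw [partrec_iff_arthur, arthurCode_sigmaOf]
    exact recIn_partrec (natSigma_recIn h) hpr
end

section
/- Let (P₂,Q₂) and (P₁,Q₁) be pairs of disjoint inhabited subsets of ℕ. If (P₂,Q₂) is many-one reducible to (P₁,Q₁), then the decoding oracle d_{P₂,Q₂} is T1-reducible to the decoding oracle d_{P₁,Q₁}. -/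
infixl:70 " ⊗ " => tensor

/-- Many-one reducibility of promise problems: `(P₂,Q₂)` is many-one reducible to
`(P₁,Q₁)` via a partial computable function defined on all of `P₂ ∪ Q₂`. -/
def PromiseMRed (P₂ Q₂ P₁ Q₁ : Set ℕ) : Prop :=
  ∃ f : ℕ →. ℕ, Nat.Partrec f ∧ (∀ n ∈ P₂ ∪ Q₂, (f n).Dom) ∧
    (∀ n ∈ P₂, ∀ a ∈ f n, a ∈ P₁) ∧ (∀ n ∈ Q₂, ∀ a ∈ f n, a ∈ Q₁)


theorem partrec_recursiveIn (g : ℕ →. ℕ) {f : ℕ →. ℕ} (hf : Nat.Partrec f) :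
    Nat.RecursiveInOracle g f := by
  induction hf with
  | zero => exact .zero
  | succ => exact .succ
  | left => exact .left
  | right => exact .right
  | pair _ _ ih1 ih2 => exact .pair ih1 ih2
  | comp _ _ ih1 ih2 => exact .comp ih1 ih2
  | prec _ _ ih1 ih2 => exact .prec ih1 ih2
  | rfind _ ih => exact .rfind ih

theorem stmt9 (P₂ Q₂ P₁ Q₁ : Set ℕ)
    (hd2 : Disjoint P₂ Q₂) (hP2 : P₂.Nonempty) (hQ2 : Q₂.Nonempty)
    (hd1 : Disjoint P₁ Q₁) (hP1 : P₁.Nonempty) (hQ1 : Q₁.Nonempty)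
    (hred : PromiseMRed P₂ Q₂ P₁ Q₁) :
    T1Reducible (dOracle P₂ Q₂) (dOracle P₁ Q₁) := by
  obtain ⟨f, hf, hdom, hfP, hfQ⟩ := hred
  refine ⟨fun n => f n >>= dOracle P₁ Q₁, .comp (.oracle) (partrec_recursiveIn _ hf), ?_⟩
  intro n a ha
  obtain ⟨hn, rfl⟩ := ha
  by_cases hnP : n ∈ P₂
  · have hdf : (f n).Dom := hdom n (Or.inl hnP)
    refine ⟨⟨hdf, Or.inl (hfP n hnP _ (Part.get_mem hdf))⟩, ?_⟩
    have h1 : (f n).get hdf ∈ P₁ := hfP n hnP _ (Part.get_mem hdf)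
    have h2 : (f n).get hdf ∉ Q₁ := fun h => hd1.ne_of_mem h1 h rfl
    have h3 : n ∉ Q₂ := fun h => hd2.ne_of_mem hnP h rfl
    apply Part.get_eq_of_mem
    exact Part.mem_bind_iff.2 ⟨_, Part.get_mem hdf, ⟨Or.inl h1, by simp [dOracle, h2, h3]⟩⟩
  · have hnQ : n ∈ Q₂ := hn.resolve_left hnP
    have hdf : (f n).Dom := hdom n (Or.inr hnQ)
    have h1 : (f n).get hdf ∈ Q₁ := hfQ n hnQ _ (Part.get_mem hdf)
    refine ⟨⟨hdf, Or.inr h1⟩, ?_⟩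
    apply Part.get_eq_of_mem
    exact Part.mem_bind_iff.2 ⟨_, Part.get_mem hdf, ⟨Or.inr h1, by simp [dOracle, h1, hnQ]⟩⟩
end

section
/- Let A ⊆ ℕ. Then the decoding oracle d_{H₀^A, H₁^A} is T1-equivalent to the characteristic function of A: d_{H₀^A, H₁^A} has an extension recursive in the characteristic function of A, and the characteristic function of A is recursive in d_{H₀^A, H₁^A}. -/
infixl:70 " ⊗ " => tensor

namespace Stmt13

theorem pbind (a : ℕ) (f : ℕ →. ℕ) : (Part.some a >>= f) = f a := Part.bind_some a f

theorem pmem (x : Part ℕ) (f : ℕ →. ℕ) (b : ℕ) : b ∈ (x >>= f) ↔ ∃ a ∈ x, b ∈ f a :=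
  Part.mem_bind_iff

theorem recIn_of_eq {g f f' : ℕ →. ℕ} (h : Nat.RecursiveInOracle g f) (he : ∀ n, f n = f' n) :
    Nat.RecursiveInOracle g f' := (funext he : f = f') ▸ h

theorem recIn_of_partrec {g f : ℕ →. ℕ} (h : Nat.Partrec f) : Nat.RecursiveInOracle g f := by
  induction h with
  | zero => exact .zero
  | succ => exact .succ
  | left => exact .left
  | right => exact .right
  | pair hf hg ih1 ih2 => exact .pair ih1 ih2
  | comp hf hg ih1 ih2 => exact .comp ih1 ih2
  | prec hf hg ih1 ih2 => exact .prec ih1 ih2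
  | rfind hf ih => exact .rfind ih

def encO : OCode → ℕ
  | .zero => 0
  | .succ => 1
  | .left => 2
  | .right => 3
  | .oracle => 4
  | .pair a b => 4 * Nat.pair (encO a) (encO b) + 5
  | .comp a b => 4 * Nat.pair (encO a) (encO b) + 6
  | .prec a b => 4 * Nat.pair (encO a) (encO b) + 7
  | .rfind' a => 4 * Nat.pair (encO a) (encO a) + 8

theorem ofNat_encO : ∀ c, OCode.ofNat (encO c) = c := by
  intro c
  induction c with
  | zero => simp [encO, OCode.ofNat]
  | succ => simp [encO, OCode.ofNat]
  | left => simp [encO, OCode.ofNat]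
  | right => simp [encO, OCode.ofNat]
  | oracle => simp [encO, OCode.ofNat]
  | pair a b iha ihb =>
      have e : encO (.pair a b) = (4 * Nat.pair (encO a) (encO b)) + 5 := rfl
      rw [e, OCode.ofNat]
      have h1 : 4 * Nat.pair (encO a) (encO b) % 4 = 0 := by omega
      have h2 : 4 * Nat.pair (encO a) (encO b) / 4 = Nat.pair (encO a) (encO b) := by omega
      simp [h1, h2, iha, ihb]
  | comp a b iha ihb =>
      have e : encO (.comp a b) = (4 * Nat.pair (encO a) (encO b) + 1) + 5 := rfl
      rw [e, OCode.ofNat]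
      have h1 : (4 * Nat.pair (encO a) (encO b) + 1) % 4 = 1 := by omega
      have h2 : (4 * Nat.pair (encO a) (encO b) + 1) / 4 = Nat.pair (encO a) (encO b) := by omega
      simp [h1, h2, iha, ihb]
  | prec a b iha ihb =>
      have e : encO (.prec a b) = (4 * Nat.pair (encO a) (encO b) + 2) + 5 := rfl
      rw [e, OCode.ofNat]
      have h1 : (4 * Nat.pair (encO a) (encO b) + 2) % 4 = 2 := by omega
      have h2 : (4 * Nat.pair (encO a) (encO b) + 2) / 4 = Nat.pair (encO a) (encO b) := by omega
      simp [h1, h2, iha, ihb]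
  | rfind' a iha =>
      have e : encO (.rfind' a) = (4 * Nat.pair (encO a) (encO a) + 3) + 5 := rfl
      rw [e, OCode.ofNat]
      have h1 : (4 * Nat.pair (encO a) (encO a) + 3) % 4 = 3 := by omega
      have h2 : (4 * Nat.pair (encO a) (encO a) + 3) / 4 = Nat.pair (encO a) (encO a) := by omega
      simp [h1, h2, iha]

def constO : ℕ → OCode
  | 0 => .zero
  | n + 1 => .comp .succ (constO n)

theorem eval_constO (g : ℕ →. ℕ) (n x : ℕ) : (constO n).eval g x = Part.some n := by
  induction n with
  | zero => rfl
  | succ n ih => simp [constO, OCode.eval, ih, PFun.coe_val, pbind]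

def codeOf (n : ℕ) : ℕ := encO (.comp .oracle (constO n))

theorem phi_codeOf (g : ℕ → ℕ) (n x : ℕ) : phi ↑g (codeOf n) x = Part.some (g n) := by
  simp [phi, codeOf, ofNat_encO, OCode.eval, eval_constO, PFun.coe_val, pbind]

theorem codeOf_primrec : Primrec codeOf := by
  have h1 : Primrec (fun n => encO (constO n)) := by
    have step : Primrec (fun p : ℕ × ℕ => 4 * Nat.pair 1 p.2 + 6) :=
      Primrec.nat_add.comp (Primrec.nat_mul.comp (Primrec.const 4)
        (Primrec₂.natPair.comp (Primrec.const 1) Primrec.snd)) (Primrec.const 6)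
    have : Primrec (Nat.rec (motive := fun _ => ℕ) 0
        (fun _ IH => 4 * Nat.pair 1 IH + 6)) := Primrec.nat_rec₁ _ step.to₂
    apply this.of_eq
    intro n
    induction n with
    | zero => rfl
    | succ n ih =>
        rw [show encO (constO (n+1)) = 4 * Nat.pair 1 (encO (constO n)) + 6 from rfl, ← ih]
  have : Primrec (fun n => 4 * Nat.pair 4 (encO (constO n)) + 6) := by
    exact Primrec.nat_add.comp
      (Primrec.nat_mul.comp (Primrec.const 4)
        (Primrec₂.natPair.comp (Primrec.const 4) h1)) (Primrec.const 6)
  exact this.of_eq fun n => rfl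

theorem part2 (A : Set ℕ) : Nat.RecursiveInOracle (dOracle (Hset A 0) (Hset A 1)) ↑(chi A) := by
  classical
  set P := Hset A 0
  set Q := Hset A 1
  have hphi : ∀ n, phi ↑(chi A) (codeOf n) 0 = Part.some (chi A n) :=
    fun n => phi_codeOf (chi A) n 0
  have hQ : ∀ n, codeOf n ∈ Q ↔ n ∈ A := by
    intro n
    constructor
    · intro h
      have h1 : (1 : ℕ) ∈ phi ↑(chi A) (codeOf n) 0 := h
      rw [hphi n] at h1
      have := Part.mem_some_iff.1 h1
      by_contra hn
      simp [chi, hn] at this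
    · intro h
      show (1 : ℕ) ∈ phi ↑(chi A) (codeOf n) 0
      rw [hphi n]
      simp [chi, h]
  have hmem : ∀ n, codeOf n ∈ P ∪ Q := by
    intro n
    by_cases h : n ∈ A
    · right; exact (hQ n).2 h
    · left
      show (0 : ℕ) ∈ phi ↑(chi A) (codeOf n) 0
      rw [hphi n]
      simp [chi, h]
  have key : ∀ n, dOracle P Q (codeOf n) = Part.some (chi A n) := by
    intro n
    refine Part.eq_some_iff.2 ?_
    refine ⟨hmem n, ?_⟩
    show (if codeOf n ∈ Q then 1 else 0) = chi A n
    by_cases h : n ∈ A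
    · rw [if_pos ((hQ n).2 h)]; simp [chi, h]
    · rw [if_neg (fun hc => h ((hQ n).1 hc))]; simp [chi, h]
  have hc : Nat.Partrec (↑codeOf : ℕ →. ℕ) :=
    Nat.Partrec.of_primrec (Primrec.nat_iff.1 codeOf_primrec)
  have : Nat.RecursiveInOracle (dOracle P Q)
      (fun n => (↑codeOf : ℕ →. ℕ) n >>= dOracle P Q) :=
    .comp .oracle (recIn_of_partrec hc)
  exact recIn_of_eq this fun n => by
    simp [PFun.coe_val, key n, pbind]

end Stmt13
namespace Stmt13
open Nat.Partrec (Code)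

def lookupPF : ℕ →. ℕ :=
  fun x => Part.ofOption ((Denumerable.ofNat (List ℕ) x.unpair.1)[x.unpair.2]?)

theorem lookupPF_partrec : Nat.Partrec lookupPF := by
  have h : Computable (fun x : ℕ => (Denumerable.ofNat (List ℕ) x.unpair.1)[x.unpair.2]?) :=
    Primrec.to_comp (Primrec.list_getElem?.comp
      ((Primrec.ofNat (List ℕ)).comp (Primrec.fst.comp Primrec.unpair))
      (Primrec.snd.comp Primrec.unpair))
  exact Partrec.nat_iff.1 h.ofOption

noncomputable def oracleCode : Code :=
  Classical.choose (Nat.Partrec.Code.exists_code.1 lookupPF_partrec)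

theorem oracleCode_eval : oracleCode.eval = lookupPF :=
  Classical.choose_spec (Nat.Partrec.Code.exists_code.1 lookupPF_partrec)

def cρ : Code :=
  Code.pair (Code.pair Code.left (Code.left.comp Code.right)) (Code.right.comp Code.right)

def cσ : Code :=
  Code.pair (Code.left.comp Code.left) (Code.pair (Code.right.comp Code.left) Code.right)

noncomputable def tr : OCode → Code
  | .zero => Code.zero
  | .succ => Code.succ.comp Code.right
  | .left => Code.left.comp Code.right
  | .right => Code.right.comp Code.right
  | .oracle => oracleCode
  | .pair cf cg => Code.pair (tr cf) (tr cg)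
  | .comp cf cg => (tr cf).comp (Code.pair Code.left (tr cg))
  | .prec cf cg => (Code.prec (tr cf) ((tr cg).comp cσ)).comp cρ
  | .rfind' cf => (Code.rfind' ((tr cf).comp cσ)).comp cρ

def lOracle (L : List ℕ) : ℕ →. ℕ := fun q => Part.ofOption (L[q]?)

theorem tr_eval : ∀ (c : OCode) (L : List ℕ) (n : ℕ),
    Code.eval (tr c) (Nat.pair (Encodable.encode L) n) = OCode.eval (lOracle L) c n := by
  intro c
  induction c with
  | zero => intro L n; rfl
  | succ => intro L n; simp [tr, Nat.Partrec.Code.eval, OCode.eval, pbind]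
  | left => intro L n; simp [tr, Nat.Partrec.Code.eval, OCode.eval, pbind]
  | right => intro L n; simp [tr, Nat.Partrec.Code.eval, OCode.eval, pbind]
  | oracle =>
      intro L n
      simp [tr, oracleCode_eval, lookupPF, OCode.eval, lOracle, Denumerable.ofNat_encode]
  | pair cf cg ihf ihg =>
      intro L n
      simp [tr, Nat.Partrec.Code.eval, OCode.eval, ihf, ihg]
  | comp cf cg ihf ihg =>
      intro L n
      simp [tr, Nat.Partrec.Code.eval, OCode.eval, ihg, pbind]
      rw [show Part.some (Nat.pair (Encodable.encode L)) <*> OCode.eval (lOracle L) cg n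
          = (OCode.eval (lOracle L) cg n).map (Nat.pair (Encodable.encode L)) from by
        simp [Seq.seq]]
      apply Part.ext
      intro a
      simp only [Part.mem_bind_iff, Part.mem_map_iff, pmem]
      constructor
      · rintro ⟨y, ⟨z, hz, rfl⟩, ha⟩
        exact ⟨z, hz, by rwa [ihf] at ha⟩
      · rintro ⟨z, hz, ha⟩
        exact ⟨Nat.pair (Encodable.encode L) z, ⟨z, hz, rfl⟩, by rwa [ihf]⟩
  | prec cf cg ihf ihg =>
      intro L n
      have hσ : ∀ u v w, Code.eval cσ (Nat.pair (Nat.pair u v) w)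
          = Part.some (Nat.pair u (Nat.pair v w)) := by
        intro u v w; simp [cσ, Nat.Partrec.Code.eval, Seq.seq, pbind]
      have hρ : Code.eval cρ (Nat.pair (Encodable.encode L) n)
          = Part.some (Nat.pair (Nat.pair (Encodable.encode L) n.unpair.1) n.unpair.2) := by
        simp [cρ, Nat.Partrec.Code.eval, Seq.seq, pbind]
      show Code.eval ((Code.prec (tr cf) ((tr cg).comp cσ)).comp cρ) _ = _
      rw [Nat.Partrec.Code.eval]
      show cρ.eval (Nat.pair (Encodable.encode L) n) >>=
          (Code.prec (tr cf) ((tr cg).comp cσ)).eval = _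
      rw [hρ, pbind]
      rw [Nat.Partrec.Code.eval]
      simp only [OCode.eval, Nat.unpaired, Nat.unpair_pair]
      have main : ∀ m : ℕ,
          (Nat.rec (Code.eval (tr cf) (Nat.pair (Encodable.encode L) n.unpair.1))
            (fun y IH => IH.bind fun i => Code.eval ((tr cg).comp cσ)
              (Nat.pair (Nat.pair (Encodable.encode L) n.unpair.1) (Nat.pair y i))) m : Part ℕ)
          = Nat.rec (OCode.eval (lOracle L) cf n.unpair.1)
            (fun y IH => IH.bind fun i => OCode.eval (lOracle L) cg
              (Nat.pair n.unpair.1 (Nat.pair y i))) m := by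
        intro m
        induction m with
        | zero => exact ihf L n.unpair.1
        | succ m ihm =>
            show (Nat.rec (Code.eval (tr cf) (Nat.pair (Encodable.encode L) n.unpair.1))
              (fun y IH => IH.bind fun i => Code.eval ((tr cg).comp cσ)
                (Nat.pair (Nat.pair (Encodable.encode L) n.unpair.1) (Nat.pair y i))) m :
                  Part ℕ).bind
              (fun i => Code.eval ((tr cg).comp cσ)
                (Nat.pair (Nat.pair (Encodable.encode L) n.unpair.1) (Nat.pair m i)))
              = (Nat.rec (OCode.eval (lOracle L) cf n.unpair.1)
              (fun y IH => IH.bind fun i => OCode.eval (lOracle L) cg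
                (Nat.pair n.unpair.1 (Nat.pair y i))) m : Part ℕ).bind
              (fun i => OCode.eval (lOracle L) cg (Nat.pair n.unpair.1 (Nat.pair m i)))
            rw [ihm]
            congr 1
            funext i
            rw [show Code.eval ((tr cg).comp cσ) (Nat.pair (Nat.pair (Encodable.encode L)
              n.unpair.1) (Nat.pair m i)) = cσ.eval (Nat.pair (Nat.pair (Encodable.encode L)
              n.unpair.1) (Nat.pair m i)) >>= (tr cg).eval from rfl, hσ, pbind, ihg]
      exact main n.unpair.2
  | rfind' cf ihf =>
      intro L n
      have hσ : ∀ u v w, Code.eval cσ (Nat.pair (Nat.pair u v) w)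
          = Part.some (Nat.pair u (Nat.pair v w)) := by
        intro u v w; simp [cσ, Nat.Partrec.Code.eval, Seq.seq, pbind]
      have hρ : Code.eval cρ (Nat.pair (Encodable.encode L) n)
          = Part.some (Nat.pair (Nat.pair (Encodable.encode L) n.unpair.1) n.unpair.2) := by
        simp [cρ, Nat.Partrec.Code.eval, Seq.seq, pbind]
      show Code.eval ((Code.rfind' ((tr cf).comp cσ)).comp cρ) _ = _
      rw [Nat.Partrec.Code.eval]
      show cρ.eval (Nat.pair (Encodable.encode L) n) >>=
          (Code.rfind' ((tr cf).comp cσ)).eval = _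
      rw [hρ, pbind]
      rw [Nat.Partrec.Code.eval]
      simp only [OCode.eval, Nat.unpaired, Nat.unpair_pair]
      congr 1
      apply congrArg
      funext j
      rw [show Code.eval ((tr cf).comp cσ) (Nat.pair (Nat.pair (Encodable.encode L)
        n.unpair.1) (j + n.unpair.2)) = cσ.eval (Nat.pair (Nat.pair (Encodable.encode L)
        n.unpair.1) (j + n.unpair.2)) >>= (tr cf).eval from rfl, hσ, pbind, ihf]

end Stmt13
namespace Stmt13

theorem mem_fmap_iff {α β : Type} {f : α → β} {o : Part α} {b : β} :
    b ∈ f <$> o ↔ ∃ a ∈ o, f a = b := by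
  rw [Part.map_eq_map]; exact Part.mem_map_iff _

theorem eval_prec_succ (g : ℕ →. ℕ) (cf cg : OCode) (x m : ℕ) :
    OCode.eval g (.prec cf cg) (Nat.pair x (m+1))
      = (OCode.eval g (.prec cf cg) (Nat.pair x m)).bind
          fun i => OCode.eval g cg (Nat.pair x (Nat.pair m i)) := by
  simp only [OCode.eval, Nat.unpaired, Nat.unpair_pair]
  rfl

theorem eval_prec_zero' (g : ℕ →. ℕ) (cf cg : OCode) (x : ℕ) :
    OCode.eval g (.prec cf cg) (Nat.pair x 0) = OCode.eval g cf x := by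
  simp only [OCode.eval, Nat.unpaired, Nat.unpair_pair]
  rfl

theorem oeval_mono {g g' : ℕ →. ℕ} (H : ∀ q a, a ∈ g q → a ∈ g' q) :
    ∀ (c : OCode) (n a : ℕ), a ∈ OCode.eval g c n → a ∈ OCode.eval g' c n := by
  intro c
  induction c with
  | zero => exact fun n a h => h
  | succ => exact fun n a h => h
  | left => exact fun n a h => h
  | right => exact fun n a h => h
  | oracle => exact fun n a h => H n a h
  | pair cf cg ihf ihg =>
      intro n a h
      simp only [OCode.eval, Seq.seq, Part.bind_eq_bind, Part.mem_bind_iff, Part.map_eq_map,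
        Part.mem_map_iff] at h ⊢
      obtain ⟨x, ⟨u, hu, rfl⟩, y, hy, rfl⟩ := h
      exact ⟨_, ⟨u, ihf _ _ hu, rfl⟩, y, ihg _ _ hy, rfl⟩
  | comp cf cg ihf ihg =>
      intro n a h
      simp only [OCode.eval, pmem, Part.mem_bind_iff] at h ⊢
      obtain ⟨m, hm, ha⟩ := h
      exact ⟨m, ihg _ _ hm, ihf _ _ ha⟩
  | prec cf cg ihf ihg =>
      intro n
      rw [show n = Nat.pair n.unpair.1 n.unpair.2 by rw [Nat.pair_unpair]]
      generalize n.unpair.1 = x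
      generalize n.unpair.2 = m
      induction m with
      | zero =>
          intro a h
          rw [eval_prec_zero'] at h ⊢
          exact ihf _ _ h
      | succ m ihm =>
          intro a h
          rw [eval_prec_succ] at h ⊢
          obtain ⟨i, hi, ha⟩ := Part.mem_bind_iff.1 h
          exact Part.mem_bind_iff.2 ⟨i, ihm _ hi, ihg _ _ ha⟩
  | rfind' cf ihf =>
      intro n a h
      simp only [OCode.eval, Nat.unpaired, Part.mem_map_iff] at h ⊢
      obtain ⟨j₀, hj₀, rfl⟩ := h
      refine ⟨j₀, ?_, rfl⟩
      have htrue := Nat.rfind_spec hj₀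
      have hfalse := fun {j} (hj : j < j₀) => Nat.rfind_min hj₀ hj
      refine Nat.mem_rfind.2 ⟨?_, fun {j} hj => ?_⟩
      · obtain ⟨v, hv, hd⟩ := (mem_fmap_iff).1 htrue
        exact mem_fmap_iff.2 ⟨v, ihf _ _ hv, hd⟩
      · obtain ⟨v, hv, hd⟩ := (mem_fmap_iff).1 (hfalse hj)
        exact mem_fmap_iff.2 ⟨v, ihf _ _ hv, hd⟩

def pref (g0 : ℕ → ℕ) (k : ℕ) : List ℕ := (List.range k).map g0

theorem lOracle_pref (g0 : ℕ → ℕ) (k q : ℕ) :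
    lOracle (pref g0 k) q = if q < k then Part.some (g0 q) else Part.none := by
  by_cases h : q < k
  · simp [lOracle, pref, List.getElem?_map, List.getElem?_range h, h]
  · have hnone : (pref g0 k)[q]? = none := by
      apply List.getElem?_eq_none_iff.2
      simp [pref]; omega
    show Part.ofOption ((pref g0 k)[q]?) = _
    rw [hnone, if_neg h]
    rfl

theorem lOracle_pref_mono (g0 : ℕ → ℕ) {k k' : ℕ} (h : k ≤ k') :
    ∀ q a, a ∈ lOracle (pref g0 k) q → a ∈ lOracle (pref g0 k') q := by
  intro q a ha
  rw [lOracle_pref] at ha ⊢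
  split at ha
  · rename_i hq
    rw [if_pos (lt_of_lt_of_le hq h)]
    exact ha
  · exact absurd ha (Part.notMem_none a)

theorem lOracle_pref_le (g0 : ℕ → ℕ) (k : ℕ) :
    ∀ q a, a ∈ lOracle (pref g0 k) q → a ∈ (↑g0 : ℕ →. ℕ) q := by
  intro q a ha
  rw [lOracle_pref] at ha
  split at ha
  · rw [Part.mem_some_iff] at ha
    rw [PFun.coe_val, Part.mem_some_iff]
    exact ha
  · exact absurd ha (Part.notMem_none a)

theorem eval_fin (g0 : ℕ → ℕ) :
    ∀ (c : OCode) (n a : ℕ), a ∈ OCode.eval (↑g0) c n →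
      ∃ k, a ∈ OCode.eval (lOracle (pref g0 k)) c n := by
  intro c
  induction c with
  | zero => exact fun n a h => ⟨0, h⟩
  | succ => exact fun n a h => ⟨0, h⟩
  | left => exact fun n a h => ⟨0, h⟩
  | right => exact fun n a h => ⟨0, h⟩
  | oracle =>
      intro n a h
      simp only [OCode.eval] at h
      rw [PFun.coe_val, Part.mem_some_iff] at h
      refine ⟨n+1, ?_⟩
      simp only [OCode.eval]
      show a ∈ lOracle (pref g0 (n+1)) n
      rw [lOracle_pref, if_pos (Nat.lt_succ_self n), Part.mem_some_iff]
      exact h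
  | pair cf cg ihf ihg =>
      intro n a h
      simp only [OCode.eval, Seq.seq, Part.bind_eq_bind, Part.mem_bind_iff, Part.map_eq_map,
        Part.mem_map_iff] at h ⊢
      obtain ⟨x, ⟨u, hu, rfl⟩, y, hy, rfl⟩ := h
      obtain ⟨k1, hk1⟩ := ihf _ _ hu
      obtain ⟨k2, hk2⟩ := ihg _ _ hy
      refine ⟨max k1 k2, ⟨_, ⟨u, oeval_mono (lOracle_pref_mono g0 (le_max_left k1 k2)) _ _ _ hk1,
        rfl⟩, y, oeval_mono (lOracle_pref_mono g0 (le_max_right k1 k2)) _ _ _ hk2, rfl⟩⟩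
  | comp cf cg ihf ihg =>
      intro n a h
      simp only [OCode.eval, pmem, Part.mem_bind_iff] at h ⊢
      obtain ⟨m, hm, ha⟩ := h
      obtain ⟨k1, hk1⟩ := ihg _ _ hm
      obtain ⟨k2, hk2⟩ := ihf _ _ ha
      exact ⟨max k1 k2, m, oeval_mono (lOracle_pref_mono g0 (le_max_left k1 k2)) _ _ _ hk1,
        oeval_mono (lOracle_pref_mono g0 (le_max_right k1 k2)) _ _ _ hk2⟩
  | prec cf cg ihf ihg =>
      intro n
      rw [show n = Nat.pair n.unpair.1 n.unpair.2 by rw [Nat.pair_unpair]]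
      generalize n.unpair.1 = x
      generalize n.unpair.2 = m
      induction m with
      | zero =>
          intro a h
          rw [eval_prec_zero'] at h
          obtain ⟨k, hk⟩ := ihf _ _ h
          refine ⟨k, ?_⟩
          rw [eval_prec_zero']
          exact hk
      | succ m ihm =>
          intro a h
          rw [eval_prec_succ] at h
          obtain ⟨i, hi, ha⟩ := Part.mem_bind_iff.1 h
          obtain ⟨k1, hk1⟩ := ihm _ hi
          obtain ⟨k2, hk2⟩ := ihg _ _ ha
          refine ⟨max k1 k2, ?_⟩
          rw [eval_prec_succ]
          exact Part.mem_bind_iff.2 ⟨i,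
            oeval_mono (lOracle_pref_mono g0 (le_max_left k1 k2)) _ _ _ hk1,
            oeval_mono (lOracle_pref_mono g0 (le_max_right k1 k2)) _ _ _ hk2⟩
  | rfind' cf ihf =>
      intro n a h
      simp only [OCode.eval, Nat.unpaired, Part.mem_map_iff] at h ⊢
      obtain ⟨j₀, hj₀, rfl⟩ := h
      have htrue := Nat.rfind_spec hj₀
      have hfalse := fun {j} (hj : j < j₀) => Nat.rfind_min hj₀ hj
      have hch : ∀ j, j ≤ j₀ → ∃ k, ∃ v, v ∈ OCode.eval (lOracle (pref g0 k)) cf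
          (Nat.pair n.unpair.1 (j + n.unpair.2)) ∧ (decide (v = 0) = decide (j = j₀)) := by
        intro j hj
        rcases lt_or_eq_of_le hj with hj | rfl
        · obtain ⟨v, hv, hd⟩ := (mem_fmap_iff).1 (hfalse hj)
          obtain ⟨k, hk⟩ := ihf _ _ hv
          exact ⟨k, v, hk, by simp [hd, Nat.ne_of_lt hj]⟩
        · obtain ⟨v, hv, hd⟩ := (mem_fmap_iff).1 htrue
          obtain ⟨k, hk⟩ := ihf _ _ hv
          exact ⟨k, v, hk, by simp [hd]⟩
      choose k hk using hch
      classical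
      set K := (Finset.range (j₀+1)).sup (fun j => if h : j ≤ j₀ then k j h else 0) with hK
      have hkK : ∀ j (hj : j ≤ j₀), k j hj ≤ K := by
        intro j hj
        have : (if h : j ≤ j₀ then k j h else 0) ≤ K :=
          Finset.le_sup (f := fun j => if h : j ≤ j₀ then k j h else 0)
            (Finset.mem_range.2 (Nat.lt_succ_of_le hj))
        rwa [dif_pos hj] at this
      refine ⟨K, j₀, ?_, rfl⟩
      refine Nat.mem_rfind.2 ⟨?_, fun {j} hj => ?_⟩
      · obtain ⟨v, hv, hd⟩ := hk j₀ le_rfl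
        refine mem_fmap_iff.2 ⟨v, oeval_mono (lOracle_pref_mono g0 (hkK j₀ le_rfl)) _ _ _ hv, ?_⟩
        simpa using hd
      · obtain ⟨v, hv, hd⟩ := hk j (le_of_lt hj)
        refine mem_fmap_iff.2 ⟨v, oeval_mono (lOracle_pref_mono g0 (hkK j (le_of_lt hj))) _ _ _ hv, ?_⟩
        simp [Nat.ne_of_lt hj] at hd
        simpa using hd

end Stmt13
namespace Stmt13
open Nat.Partrec (Code)

noncomputable def combineC (r : ℕ) (c1 c2 : Code) : Code :=
  if r = 0 then Code.pair c1 c2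
  else if r = 1 then c1.comp (Code.pair Code.left c2)
  else if r = 2 then (Code.prec c1 (c2.comp cσ)).comp cρ
  else (Code.rfind' (c1.comp cσ)).comp cρ

noncomputable def baseList : List Code :=
  [Code.zero, Code.succ.comp Code.right, Code.left.comp Code.right,
   Code.right.comp Code.right, oracleCode]

noncomputable def gstep (l : List Code) : Option Code :=
  if l.length < 5 then baseList[l.length]?
  else (l[((l.length - 5) / 4).unpair.1]?).bind fun c1 =>
       (l[((l.length - 5) / 4).unpair.2]?).map fun c2 =>
       combineC ((l.length - 5) % 4) c1 c2

noncomputable def trN : ℕ → Code := fun e => tr (OCode.ofNat e)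

theorem ofNat_add5 (n : ℕ) : OCode.ofNat (n + 5) =
    if n % 4 = 0 then .pair (OCode.ofNat (n / 4).unpair.1) (OCode.ofNat (n / 4).unpair.2)
    else if n % 4 = 1 then .comp (OCode.ofNat (n / 4).unpair.1) (OCode.ofNat (n / 4).unpair.2)
    else if n % 4 = 2 then .prec (OCode.ofNat (n / 4).unpair.1) (OCode.ofNat (n / 4).unpair.2)
    else .rfind' (OCode.ofNat (n / 4).unpair.1) := by
  rw [OCode.ofNat]

theorem gstep_spec (e : ℕ) : gstep ((List.range e).map trN) = some (trN e) := by
  rcases e with _ | _ | _ | _ | _ | n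
  · simp [gstep, baseList, trN, OCode.ofNat, tr]
  · simp [gstep, baseList, trN, OCode.ofNat, tr]
  · simp [gstep, baseList, trN, OCode.ofNat, tr]
  · simp [gstep, baseList, trN, OCode.ofNat, tr]
  · simp [gstep, baseList, trN, OCode.ofNat, tr]
  · have hlen : ((List.range (n+5)).map trN).length = n + 5 := by simp
    have h1 : (n / 4).unpair.1 < n + 5 :=
      lt_of_le_of_lt (le_trans (Nat.unpair_left_le _) (Nat.div_le_self _ _)) (by omega)
    have h2 : (n / 4).unpair.2 < n + 5 :=
      lt_of_le_of_lt (le_trans (Nat.unpair_right_le _) (Nat.div_le_self _ _)) (by omega)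
    have hget : ∀ i, i < n + 5 →
        ((List.range (n+5)).map trN)[i]? = some (trN i) := by
      intro i hi
      rw [List.getElem?_map, List.getElem?_range hi]
      rfl
    rw [gstep, hlen, if_neg (by omega), Nat.add_sub_cancel, hget _ h1, hget _ h2]
    simp only [Option.bind_some, Option.map_some]
    congr 1
    show combineC (n % 4) (trN (n / 4).unpair.1) (trN (n / 4).unpair.2) = trN (n + 5)
    rw [show trN (n+5) = tr (OCode.ofNat (n+5)) from rfl, ofNat_add5]
    rcases (show n % 4 = 0 ∨ n % 4 = 1 ∨ n % 4 = 2 ∨ n % 4 = 3 by omega) with h | h | h | h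
    · rw [if_pos h]; simp [combineC, h, tr, trN]
    · rw [if_neg (by omega), if_pos h]; simp [combineC, h, tr, trN]
    · rw [if_neg (by omega), if_neg (by omega), if_pos h]; simp [combineC, h, tr, trN]
    · rw [if_neg (by omega), if_neg (by omega), if_neg (by omega)]
      simp [combineC, h, tr, trN]

theorem gstep_primrec : Primrec gstep := by
  have llen : Primrec (fun l : List Code => l.length) := Primrec.list_length
  have hm : Primrec (fun l : List Code => l.length - 5) :=
    Primrec.nat_sub.comp llen (Primrec.const 5)
  have hi1 : Primrec (fun l : List Code => ((l.length - 5) / 4).unpair.1) :=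
    Primrec.fst.comp (Primrec.unpair.comp (Primrec.nat_div.comp hm (Primrec.const 4)))
  have hi2 : Primrec (fun l : List Code => ((l.length - 5) / 4).unpair.2) :=
    Primrec.snd.comp (Primrec.unpair.comp (Primrec.nat_div.comp hm (Primrec.const 4)))
  have hr : Primrec (fun l : List Code => (l.length - 5) % 4) :=
    Primrec.nat_mod.comp hm (Primrec.const 4)
  have hcomb : Primrec (fun t : (ℕ × Code) × Code => combineC t.1.1 t.1.2 t.2) := by
    have c1 : Primrec (fun t : (ℕ × Code) × Code => t.1.2) := Primrec.snd.comp Primrec.fst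
    have c2 : Primrec (fun t : (ℕ × Code) × Code => t.2) := Primrec.snd
    have rr : Primrec (fun t : (ℕ × Code) × Code => t.1.1) := Primrec.fst.comp Primrec.fst
    exact Primrec.ite (Primrec.eq.comp rr (Primrec.const 0))
      (Nat.Partrec.Code.primrec₂_pair.comp c1 c2)
      (Primrec.ite (Primrec.eq.comp rr (Primrec.const 1))
        (Nat.Partrec.Code.primrec₂_comp.comp c1
          (Nat.Partrec.Code.primrec₂_pair.comp (Primrec.const Code.left) c2))
        (Primrec.ite (Primrec.eq.comp rr (Primrec.const 2))
          (Nat.Partrec.Code.primrec₂_comp.comp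
            (Nat.Partrec.Code.primrec₂_prec.comp c1
              (Nat.Partrec.Code.primrec₂_comp.comp c2 (Primrec.const cσ)))
            (Primrec.const cρ))
          (Nat.Partrec.Code.primrec₂_comp.comp
            (Nat.Partrec.Code.primrec_rfind'.comp
              (Nat.Partrec.Code.primrec₂_comp.comp c1 (Primrec.const cσ)))
            (Primrec.const cρ))))
  have hbranch2 : Primrec (fun l : List Code =>
      (l[((l.length - 5) / 4).unpair.1]?).bind fun c1 =>
      (l[((l.length - 5) / 4).unpair.2]?).map fun c2 =>
      combineC ((l.length - 5) % 4) c1 c2) := by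
    apply Primrec.option_bind (Primrec.list_getElem?.comp Primrec.id hi1)
    apply Primrec.option_map
      (Primrec.list_getElem?.comp (Primrec.fst) (hi2.comp Primrec.fst))
    exact (hcomb.comp (((hr.comp (Primrec.fst.comp Primrec.fst)).pair
      (Primrec.snd.comp Primrec.fst)).pair Primrec.snd)).to₂
  exact Primrec.ite (Primrec.nat_lt.comp llen (Primrec.const 5))
    ((Primrec.list_getElem?₁ baseList).comp llen) hbranch2

theorem trN_primrec : Primrec trN := by
  have h := Primrec.nat_strong_rec (fun (_ : Unit) e => trN e)
    (g := fun (_ : Unit) l => gstep l) (gstep_primrec.comp Primrec.snd).to₂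
    (fun _ e => gstep_spec e)
  exact h.comp (Primrec.const ()) Primrec.id

end Stmt13
namespace Stmt13

theorem recIn_total {g : ℕ →. ℕ} {f : ℕ → ℕ} (hf : Primrec f) : Nat.RecursiveInOracle g ↑f :=
  recIn_of_partrec (Nat.Partrec.of_primrec (Primrec.nat_iff.1 hf))

theorem recIn_id {g : ℕ →. ℕ} : Nat.RecursiveInOracle g (fun n => Part.some n) :=
  recIn_of_eq (recIn_total Primrec.id) fun _ => rfl

/-- the encoded reversed prefix of `g0` -/
def R (g0 : ℕ → ℕ) : ℕ → ℕ := fun m => Nat.rec 0 (fun y i => Nat.pair (g0 y) i + 1) m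

def vN (g0 : ℕ → ℕ) (k : ℕ) : ℕ := Encodable.encode (pref g0 k)

theorem R_eq (g0 : ℕ → ℕ) (m : ℕ) :
    R g0 m = Encodable.encode (((List.range m).map g0).reverse) := by
  induction m with
  | zero => rfl
  | succ m ih =>
      have : ((List.range (m+1)).map g0).reverse = g0 m :: ((List.range m).map g0).reverse := by
        rw [List.range_succ]
        simp
      rw [this, Encodable.encode_list_cons]
      show Nat.pair (g0 m) (R g0 m) + 1 = _
      rw [ih, Encodable.encode_nat]

theorem vN_recIn (g0 : ℕ → ℕ) : Nat.RecursiveInOracle ↑g0 ↑(vN g0) := by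
  have hZ : Nat.RecursiveInOracle ↑g0 (fun _ : ℕ => Part.some 0) :=
    recIn_of_eq .zero fun _ => rfl
  have hproj1 : Nat.RecursiveInOracle ↑g0 (↑(fun x : ℕ => x.unpair.2.unpair.1) : ℕ →. ℕ) :=
    recIn_total (Primrec.fst.comp (Primrec.unpair.comp (Primrec.snd.comp Primrec.unpair)))
  have hproj2 : Nat.RecursiveInOracle ↑g0 (↑(fun x : ℕ => x.unpair.2.unpair.2) : ℕ →. ℕ) :=
    recIn_total (Primrec.snd.comp (Primrec.unpair.comp (Primrec.snd.comp Primrec.unpair)))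
  have hq1 : Nat.RecursiveInOracle ↑g0 (fun x : ℕ => Part.some (g0 x.unpair.2.unpair.1)) := by
    refine recIn_of_eq (.comp .oracle hproj1) fun x => ?_
    simp [PFun.coe_val, pbind]
  have hH : Nat.RecursiveInOracle ↑g0 (fun x : ℕ =>
      Part.some (Nat.succ (Nat.pair (g0 x.unpair.2.unpair.1) x.unpair.2.unpair.2))) := by
    have hp3 : Nat.RecursiveInOracle ↑g0 (fun x : ℕ =>
        Part.some (Nat.pair (g0 x.unpair.2.unpair.1) x.unpair.2.unpair.2)) := by
      refine recIn_of_eq (.pair hq1 hproj2) fun x => ?_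
      simp [Seq.seq, PFun.coe_val, pbind]
    refine recIn_of_eq (.comp .succ hp3) fun x => ?_
    simp [PFun.coe_val, pbind]
  have hprec := Nat.RecursiveInOracle.prec hZ hH
  have hprec' : Nat.RecursiveInOracle ↑g0 (fun x : ℕ => Part.some (R g0 x.unpair.2)) := by
    refine recIn_of_eq hprec fun x => ?_
    show Nat.unpaired _ x = _
    simp only [Nat.unpaired]
    generalize x.unpair.1 = a
    generalize x.unpair.2 = m
    induction m with
    | zero => rfl
    | succ m ih =>
        show (Nat.rec (Part.some 0) _ m : Part ℕ).bind _ = _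
        rw [ih]
        simp only [Part.bind_some, Nat.unpair_pair]
        rfl
  have hpair0 : Nat.RecursiveInOracle ↑g0 (fun k : ℕ => Part.some (Nat.pair 0 k)) := by
    refine recIn_of_eq (.pair hZ recIn_id) fun k => ?_
    simp [Seq.seq]
  have hR : Nat.RecursiveInOracle ↑g0 (fun k : ℕ => Part.some (R g0 k)) := by
    refine recIn_of_eq (.comp hprec' hpair0) fun k => ?_
    simp [Nat.unpair_pair]
  have hw3 : Primrec (fun x : ℕ => Encodable.encode ((Denumerable.ofNat (List ℕ) x).reverse)) :=
    Primrec.encode.comp (Primrec.list_reverse.comp (Primrec.ofNat (List ℕ)))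
  refine recIn_of_eq (.comp (recIn_total hw3) hR) fun k => ?_
  simp only [pbind, PFun.coe_val]
  congr 1
  rw [R_eq, Denumerable.ofNat_encode, List.reverse_reverse]
  rfl

end Stmt13
namespace Stmt13
open Nat.Partrec (Code)

noncomputable def checkN (z : ℕ) : Option ℕ :=
  Nat.Partrec.Code.evaln z.unpair.1.unpair.2.unpair.2 (trN z.unpair.1.unpair.1)
    (Nat.pair z.unpair.2 0)

theorem checkN_primrec : Primrec checkN := by
  have he : Primrec (fun z : ℕ => z.unpair.1.unpair.1) :=
    Primrec.fst.comp (Primrec.unpair.comp (Primrec.fst.comp Primrec.unpair))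
  have ht : Primrec (fun z : ℕ => z.unpair.1.unpair.2.unpair.2) :=
    Primrec.snd.comp (Primrec.unpair.comp
      (Primrec.snd.comp (Primrec.unpair.comp (Primrec.fst.comp Primrec.unpair))))
  have hL : Primrec (fun z : ℕ => z.unpair.2) := Primrec.snd.comp Primrec.unpair
  exact Nat.Partrec.Code.primrec_evaln.comp
    ((ht.pair (trN_primrec.comp he)).pair
      (Primrec₂.natPair.comp hL (Primrec.const 0)))

noncomputable def w1 (z : ℕ) : ℕ := ((checkN z).map fun _ => 0).getD 1

noncomputable def w2 (z : ℕ) : ℕ := (checkN z).getD 0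

theorem w1_primrec : Primrec w1 :=
  Primrec.option_getD.comp
    (Primrec.option_map checkN_primrec (Primrec.const 0).to₂) (Primrec.const 1)

theorem w2_primrec : Primrec w2 :=
  Primrec.option_getD.comp checkN_primrec (Primrec.const 0)

theorem part1 (A : Set ℕ) :
    ∃ h : ℕ →. ℕ, Nat.RecursiveInOracle ↑(chi A) h ∧
      ∀ n : ℕ, ∀ a ∈ dOracle (Hset A 0) (Hset A 1) n, a ∈ h n := by
  classical
  set g0 : ℕ → ℕ := chi A with hg0
  -- building blocks
  have hs : Nat.RecursiveInOracle ↑g0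
      (fun x : ℕ => Part.some (Nat.pair x (vN g0 x.unpair.2.unpair.1))) := by
    have hkproj : Nat.RecursiveInOracle ↑g0 (↑(fun x : ℕ => x.unpair.2.unpair.1) : ℕ →. ℕ) :=
      recIn_total (Primrec.fst.comp (Primrec.unpair.comp (Primrec.snd.comp Primrec.unpair)))
    have hv : Nat.RecursiveInOracle ↑g0 (fun x : ℕ => Part.some (vN g0 x.unpair.2.unpair.1)) := by
      refine recIn_of_eq (.comp (vN_recIn g0) hkproj) fun x => ?_
      simp [PFun.coe_val, pbind]
    refine recIn_of_eq (.pair recIn_id hv) fun x => ?_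
    simp [Seq.seq]
  have hf : Nat.RecursiveInOracle ↑g0
      (fun x : ℕ => Part.some (w1 (Nat.pair x (vN g0 x.unpair.2.unpair.1)))) := by
    refine recIn_of_eq (.comp (recIn_total w1_primrec) hs) fun x => ?_
    simp [PFun.coe_val, pbind]
  have hout : Nat.RecursiveInOracle ↑g0
      (fun y : ℕ => Part.some (w2 (Nat.pair y (vN g0 y.unpair.2.unpair.1)))) := by
    refine recIn_of_eq (.comp (recIn_total w2_primrec) hs) fun x => ?_
    simp [PFun.coe_val, pbind]
  have hrf := Nat.RecursiveInOracle.rfind hf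
  have hfinal := Nat.RecursiveInOracle.comp hout (Nat.RecursiveInOracle.pair recIn_id hrf)
  refine ⟨_, hfinal, ?_⟩
  -- extension property
  intro e a ha
  -- step 0 : a is the value of φ_e^{chi A}(0)
  have hphi : a ∈ phi ↑g0 e 0 := by
    obtain ⟨hdom, hval⟩ := ha
    by_cases h1 : e ∈ Hset A 1
    · have : a = 1 := by rw [← hval]; exact if_pos h1
      rw [this]; exact h1
    · have hd : e ∈ Hset A 0 := by
        rcases hdom with h | h
        · exact h
        · exact absurd h h1
      have : a = 0 := by rw [← hval]; exact if_neg h1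
      rw [this]; exact hd
  -- step 1 : finite use + translation + evaln
  obtain ⟨k, hk⟩ := eval_fin g0 (OCode.ofNat e) 0 a hphi
  rw [← tr_eval] at hk
  obtain ⟨t, ht⟩ := Nat.Partrec.Code.evaln_complete.1 hk
  have hcheck : checkN (Nat.pair (Nat.pair e (Nat.pair k t)) (vN g0 k)) = some a := by
    show Nat.Partrec.Code.evaln _ (trN _) _ = some a
    simp only [Nat.unpair_pair]
    exact ht
  -- the rfind test is total and succeeds at (k, t)
  set F : ℕ → ℕ → ℕ := fun e m => w1 (Nat.pair (Nat.pair e m) (vN g0 m.unpair.1)) with hF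
  have hFval : ∀ m, (fun x : ℕ => Part.some (w1 (Nat.pair x (vN g0 x.unpair.2.unpair.1))))
      (Nat.pair e m) = Part.some (F e m) := by
    intro m; simp [hF, Nat.unpair_pair]
  have hFsucc : F e (Nat.pair k t) = 0 := by
    simp [hF, w1, Nat.unpair_pair, hcheck]
  -- rfind converges
  have hrfmem : ∃ m₀, m₀ ∈ Nat.rfind (fun m => (fun v => decide (v = 0)) <$>
      (fun x : ℕ => Part.some (w1 (Nat.pair x (vN g0 x.unpair.2.unpair.1))))
        (Nat.pair e m)) := by
    have : ∃ m₀ ∈ Nat.rfind (fun m => (fun v => decide (v = 0)) <$>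
        (fun x : ℕ => Part.some (w1 (Nat.pair x (vN g0 x.unpair.2.unpair.1))))
          (Nat.pair e m)), m₀ ≤ Nat.pair k t := by
      have heq : (fun m => (fun v => decide (v = 0)) <$>
          (fun x : ℕ => Part.some (w1 (Nat.pair x (vN g0 x.unpair.2.unpair.1))))
            (Nat.pair e m)) = fun m => (↑(fun m => decide (F e m = 0)) : ℕ →. Bool) m := by
        funext m
        rw [hFval m]
        simp [PFun.coe_val, Part.map_some]
      rw [heq]
      exact Nat.rfind_min' (p := fun m => decide (F e m = 0)) (by simp [hFsucc])
    obtain ⟨m₀, hm₀, _⟩ := this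
    exact ⟨m₀, hm₀⟩
  obtain ⟨m₀, hm₀⟩ := hrfmem
  -- the found point has a convergent check
  have hQ : ∃ b, checkN (Nat.pair (Nat.pair e m₀) (vN g0 m₀.unpair.1)) = some b := by
    have := Nat.rfind_spec hm₀
    rw [hFval m₀] at this
    have h0 : F e m₀ = 0 := by
      obtain ⟨v, hv, hd⟩ := mem_fmap_iff.1 this
      rw [Part.mem_some_iff] at hv
      subst hv
      simpa using hd
    rw [hF] at h0
    simp only at h0
    rcases hc : checkN (Nat.pair (Nat.pair e m₀) (vN g0 m₀.unpair.1)) with _ | b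
    · exfalso
      rw [w1, hc] at h0
      simp at h0
    · exact ⟨b, rfl⟩
  obtain ⟨b, hb⟩ := hQ
  -- b equals a
  have hba : b = a := by
    have hbmem : b ∈ Nat.Partrec.Code.evaln m₀.unpair.2 (trN e)
        (Nat.pair (vN g0 m₀.unpair.1) 0) := by
      have : checkN (Nat.pair (Nat.pair e m₀) (vN g0 m₀.unpair.1))
          = Nat.Partrec.Code.evaln m₀.unpair.2 (trN e) (Nat.pair (vN g0 m₀.unpair.1) 0) := by
        show Nat.Partrec.Code.evaln _ (trN _) _ = _
        simp only [Nat.unpair_pair]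
      rw [← this, hb]
      rfl
    have hbeval := Nat.Partrec.Code.evaln_sound hbmem
    rw [show trN e = tr (OCode.ofNat e) from rfl] at hbeval
    rw [show (Nat.pair (vN g0 m₀.unpair.1) 0)
        = Nat.pair (Encodable.encode (pref g0 m₀.unpair.1)) 0 from rfl, tr_eval] at hbeval
    have hbg : b ∈ OCode.eval ↑g0 (OCode.ofNat e) 0 :=
      oeval_mono (lOracle_pref_le g0 m₀.unpair.1) _ _ _ hbeval
    exact Part.mem_unique hbg hphi
  -- conclude : a ∈ h e
  show a ∈ (fun n => Nat.pair <$> (fun n : ℕ => Part.some n) n <*>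
      (fun a => Nat.rfind fun n => (fun m => m = 0) <$>
        (fun x : ℕ => Part.some (w1 (Nat.pair x (vN g0 x.unpair.2.unpair.1))))
          (Nat.pair a n)) n) e >>=
    (fun y : ℕ => Part.some (w2 (Nat.pair y (vN g0 y.unpair.2.unpair.1))))
  refine Part.mem_bind_iff.2 ⟨Nat.pair e m₀, ?_, ?_⟩
  · simp only [Seq.seq, Part.bind_eq_bind, Part.mem_bind_iff]
    refine ⟨Nat.pair e, mem_fmap_iff.2 ⟨e, Part.mem_some_iff.2 rfl, rfl⟩, ?_⟩
    exact mem_fmap_iff.2 ⟨m₀, hm₀, rfl⟩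
  · rw [Part.mem_some_iff]
    simp only [Nat.unpair_pair]
    rw [w2, hb]
    simpa using hba.symm

end Stmt13

theorem stmt13 (A : Set ℕ) :
    (∃ h : ℕ →. ℕ, Nat.RecursiveInOracle ↑(chi A) h ∧
        ∀ n : ℕ, ∀ a ∈ dOracle (Hset A 0) (Hset A 1) n, a ∈ h n) ∧
      Nat.RecursiveInOracle (dOracle (Hset A 0) (Hset A 1)) ↑(chi A) :=
  ⟨Stmt13.part1 A, Stmt13.part2 A⟩
end

section
/- There exists a winning Arthur+Nimue strategy with partial computable Arthur strategy for the reduction game of the basic oracle {{n} | n ∈ ℕ} to the basic oracle {{0},{1}}, and also one for the reduction game of {{0},{1}} to {{n} | n ∈ ℕ}; i.e. these two basic oracles are T3-equivalent (either one defines the omniscient degree ω). -/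
infixl:70 " ⊗ " => tensor

theorem stmt19 :
    (∃ (σ : List ℕ →. Option ℕ) (ν : Set ℕ → List ℕ → Set ℕ),
      Partrec σ ∧ Winning (Set.range fun n : ℕ => ({n} : Set ℕ)) {{0}, {1}} σ ν) ∧
    (∃ (σ : List ℕ →. Option ℕ) (ν : Set ℕ → List ℕ → Set ℕ),
      Partrec σ ∧ Winning {{0}, {1}} (Set.range fun n : ℕ => ({n} : Set ℕ)) σ ν) := by
  classical
  constructor
  · -- σ : look at the last element; if it is 0, declare (length - 1)
    refine ⟨fun l => Part.some (if l[l.length - 1]? = some 0 then some (l.length - 1) else none),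
      fun F l => if l.length ∈ F then {0} else {1}, ?_, ?_, ?_⟩
    · apply Computable.partrec
      have h1 : Primrec fun l : List ℕ => l[l.length - 1]? :=
        Primrec.list_getElem?.comp .id (Primrec.pred.comp Primrec.list_length)
      have : Primrec fun l : List ℕ =>
          (if l[l.length - 1]? = some 0 then some (l.length - 1) else none : Option ℕ) :=
        Primrec.ite (Primrec.eq.comp h1 (Primrec.const (some 0)))
          (Primrec.option_some.comp (Primrec.pred.comp Primrec.list_length))
          (Primrec.const none)
      exact this.to_comp
    · intro F _ l
      by_cases h : l.length ∈ F <;> simp [h]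
    · rintro F ⟨n, rfl⟩ s hs
      have hlen : ∀ i, (prefixList s i).length = i := fun i => List.length_ofFn
      have hval : ∀ i, s i = if i = n then 0 else 1 := by
        intro i
        have := hs i
        dsimp only at this
        rw [hlen i] at this
        by_cases h : i = n
        · simp only [h, Set.mem_singleton_iff, if_pos rfl] at this ⊢
          simpa [Set.mem_singleton_iff] using this
        · have hn : (i : ℕ) ∉ ({n} : Set ℕ) := by simp [h]
          rw [if_neg hn] at this
          simpa [h] using this
      have hget : ∀ i j, j < i → (prefixList s i)[j]? = some (s j) := by
        intro i j hj
        simp [prefixList, List.getElem?_ofFn, hj]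
      refine ⟨n + 1, fun i _ => trivial, ?_, ?_⟩
      · intro i hi
        have hnone : (prefixList s i)[(prefixList s i).length - 1]? ≠ some 0 := by
          rcases Nat.eq_zero_or_pos i with rfl | hpos
          · simp [prefixList]
          · rw [hlen i, hget i (i - 1) (by omega)]
            have : s (i - 1) = 1 := by rw [hval]; exact if_neg (by omega)
            simp [this]
        simp only [if_neg hnone]
        exact Part.mem_some none
      · refine ⟨n, rfl, ?_⟩
        have h0 : (prefixList s (n + 1))[(prefixList s (n + 1)).length - 1]? = some 0 := by
          rw [hlen, Nat.add_sub_cancel, hget (n + 1) n (by omega)]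
          simp [hval n]
        dsimp only
        rw [h0]
        simp only [if_pos rfl, hlen, Nat.add_sub_cancel]
        exact Part.mem_some _
  · -- σ : declare the first answer
    refine ⟨fun l => Part.some l.head?,
      fun F _ => if 0 ∈ F then {0} else {1}, ?_, ?_, ?_⟩
    · exact Computable.partrec (Primrec.list_head?.to_comp)
    · intro F _ l
      by_cases h : 0 ∈ F
      · exact ⟨0, by simp [h]⟩
      · exact ⟨1, by simp [h]⟩
    · intro F hF s hs
      have h0 := hs 0
      refine ⟨1, fun i _ => trivial, ?_, ?_⟩
      · intro i hi
        interval_cases i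
        exact Part.mem_some _
      · dsimp only at h0
        refine ⟨s 0, ?_, ?_⟩
        · by_cases h : 0 ∈ F
          · rw [if_pos h] at h0
            rw [Set.mem_singleton_iff] at h0
            rw [h0]; exact h
          · rw [if_neg h] at h0
            have hF1 : F = {1} := by
              rcases hF with rfl | rfl
              · exact absurd rfl h
              · rfl
            rw [hF1]
            simpa using h0
        · have : prefixList s 1 = [s 0] := by
            simp [prefixList, List.ofFn_succ]
          rw [this]
          exact Part.mem_some _
end
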